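/- (Data-power update of Theorem 2, eq. (20).) Fix nonnegative u = (u_{l,k}), nonnegative w = (w_{l,k}), and nonnegative pilot square-root powers ρ̂, and suppose η_{l,k}(u,w,ρ̂) > 0 for every l and k ∈ A_l. Then the map ρ ↦ Σ_{l=1}^L Σ_{k∈A_l} w_{l,k} e_{l,k}(u_{l,k}, ρ̂, ρ), restricted to the box {ρ : 0 ≤ ρ_{l,k} ≤ √P_{l,k} for all l, k ∈ A_l}, attains its global minimum at the point ρ* with coordinates ρ*_{l,k} = min( √(M K) ρ̂_{l,k} u_{l,k} w_{l,k} β_{l,k}^l / η_{l,k}(u,w,ρ̂), √P_{l,k} ). -/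

import Mathlib

open Finset Filter

noncomputable section

/-- `Pset A k` : the set of cells in which user index `k` is active,
i.e. `P_k = {i : k ∈ A_i}`. -/
def Pset {L K : ℕ} (A : Fin L → Finset (Fin K)) (k : Fin K) : Finset (Fin L) :=
  Finset.univ.filter fun i => k ∈ A i

/-- The SINR denominator `D_{l,k}` for pilot powers `phat` and data powers `p`. -/
def Dterm {L K : ℕ} (M : ℕ) (σ2 : ℝ) (A : Fin L → Finset (Fin K))
    (β : Fin L → Fin K → Fin L → ℝ) (phat p : Fin L → Fin K → ℝ)
    (l : Fin L) (k : Fin K) : ℝ :=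
  (M : ℝ) * (K : ℝ) * ∑ i ∈ (Pset A k).erase l, p i k * phat i k * β i k l ^ 2 +
    ((K : ℝ) * ∑ i ∈ Pset A k, phat i k * β i k l + σ2) *
      ((∑ i, ∑ t ∈ A i, p i t * β i t l) + σ2)

/-- `SINR_{l,k}` for pilot powers `phat` and data powers `p`. -/
def SINR {L K : ℕ} (M : ℕ) (σ2 : ℝ) (A : Fin L → Finset (Fin K))
    (β : Fin L → Fin K → Fin L → ℝ) (phat p : Fin L → Fin K → ℝ)
    (l : Fin L) (k : Fin K) : ℝ :=
  (M : ℝ) * (K : ℝ) * p l k * phat l k * β l k l ^ 2 / Dterm M σ2 A β phat p l k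

/-- `SINR_{l,k}(ρ̂, ρ)` : the SINR evaluated at squared square-root powers. -/
def SINRsq {L K : ℕ} (M : ℕ) (σ2 : ℝ) (A : Fin L → Finset (Fin K))
    (β : Fin L → Fin K → Fin L → ℝ) (rhat rho : Fin L → Fin K → ℝ)
    (l : Fin L) (k : Fin K) : ℝ :=
  SINR M σ2 A β (fun i t => rhat i t ^ 2) (fun i t => rho i t ^ 2) l k

/-- The mean square error `e_{l,k}(u, ρ̂, ρ)`. -/
def eMSE {L K : ℕ} (M : ℕ) (σ2 : ℝ) (A : Fin L → Finset (Fin K))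
    (β : Fin L → Fin K → Fin L → ℝ) (u : ℝ) (rhat rho : Fin L → Fin K → ℝ)
    (l : Fin L) (k : Fin K) : ℝ :=
  (M : ℝ) * (K : ℝ) * u ^ 2 * ∑ i ∈ Pset A k, rho i k ^ 2 * rhat i k ^ 2 * β i k l ^ 2
    - 2 * Real.sqrt ((M : ℝ) * (K : ℝ)) * rho l k * rhat l k * u * β l k l
    + u ^ 2 * ((K : ℝ) * ∑ i ∈ Pset A k, rhat i k ^ 2 * β i k l + σ2) *
        ((∑ i, ∑ t ∈ A i, rho i t ^ 2 * β i t l) + σ2)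
    + 1

/-- The leading (quadratic in `u`) coefficient `A_{l,k}(ρ̂, ρ)` of `e_{l,k}`. -/
def Acoef {L K : ℕ} (M : ℕ) (σ2 : ℝ) (A : Fin L → Finset (Fin K))
    (β : Fin L → Fin K → Fin L → ℝ) (rhat rho : Fin L → Fin K → ℝ)
    (l : Fin L) (k : Fin K) : ℝ :=
  (M : ℝ) * (K : ℝ) * ∑ i ∈ Pset A k, rho i k ^ 2 * rhat i k ^ 2 * β i k l ^ 2 +
    ((K : ℝ) * ∑ i ∈ Pset A k, rhat i k ^ 2 * β i k l + σ2) *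
      ((∑ i, ∑ t ∈ A i, rho i t ^ 2 * β i t l) + σ2)

/-- The optimal beamforming coefficient `u^opt_{l,k}(ρ̂, ρ)`. -/
def uopt {L K : ℕ} (M : ℕ) (σ2 : ℝ) (A : Fin L → Finset (Fin K))
    (β : Fin L → Fin K → Fin L → ℝ) (rhat rho : Fin L → Fin K → ℝ)
    (l : Fin L) (k : Fin K) : ℝ :=
  Real.sqrt ((M : ℝ) * (K : ℝ)) * rho l k * rhat l k * β l k l /
    Acoef M σ2 A β rhat rho l k

/-- The weighted-MMSE objective `F(u, w, ρ̂, ρ)`. -/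
def Fobj {L K : ℕ} (M : ℕ) (σ2 : ℝ) (A : Fin L → Finset (Fin K))
    (β : Fin L → Fin K → Fin L → ℝ) (u w rhat rho : Fin L → Fin K → ℝ) : ℝ :=
  ∑ l, ∑ k ∈ A l, (w l k * eMSE M σ2 A β (u l k) rhat rho l k - Real.log (w l k))

/-- The pilot-power quadratic coefficient `η̂_{l,k}(u, w, ρ)`. -/
def etaHat {L K : ℕ} (M : ℕ) (σ2 : ℝ) (A : Fin L → Finset (Fin K))
    (β : Fin L → Fin K → Fin L → ℝ) (u w rho : Fin L → Fin K → ℝ)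
    (l : Fin L) (k : Fin K) : ℝ :=
  rho l k ^ 2 * (M : ℝ) * (K : ℝ) * ∑ i ∈ Pset A k, w i k * u i k ^ 2 * β l k i ^ 2 +
    (K : ℝ) * ∑ j ∈ Pset A k, w j k * u j k ^ 2 * β l k j *
      ((∑ i, ∑ t ∈ A i, rho i t ^ 2 * β i t j) + σ2)

/-- The data-power quadratic coefficient `η_{l,k}(u, w, ρ̂)`. -/
def etaData {L K : ℕ} (M : ℕ) (σ2 : ℝ) (A : Fin L → Finset (Fin K))
    (β : Fin L → Fin K → Fin L → ℝ) (u w rhat : Fin L → Fin K → ℝ)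
    (l : Fin L) (k : Fin K) : ℝ :=
  rhat l k ^ 2 * (M : ℝ) * (K : ℝ) * ∑ i ∈ Pset A k, w i k * u i k ^ 2 * β l k i ^ 2 +
    ∑ i, ∑ t ∈ A i, w i t * u i t ^ 2 * β l k i *
      ((K : ℝ) * ∑ j ∈ Pset A t, rhat j t ^ 2 * β j t i + σ2)

section Aux

variable {L K : ℕ}

/-- Swap a double sum over active pairs into the `Pset` form. -/
lemma sum_swap_active (A : Fin L → Finset (Fin K)) (f : Fin L → Fin K → ℝ) :
    ∑ l, ∑ k ∈ A l, f l k = ∑ k, ∑ l ∈ Pset A k, f l k :=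
  Finset.sum_comm' (fun l k => by simp [Pset])

/-- Symmetry of the triple sum over `{(l,k,i) : k ∈ A l, k ∈ A i}`. -/
lemma tri_swap (A : Fin L → Finset (Fin K)) (g : Fin L → Fin K → Fin L → ℝ) :
    ∑ l, ∑ k ∈ A l, ∑ i ∈ Pset A k, g l k i
      = ∑ l, ∑ k ∈ A l, ∑ i ∈ Pset A k, g i k l := by
  rw [sum_swap_active A (fun l k => ∑ i ∈ Pset A k, g l k i),
      sum_swap_active A (fun l k => ∑ i ∈ Pset A k, g i k l)]
  exact Finset.sum_congr rfl fun k _ => Finset.sum_comm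

/-- Swap two independent double sums over active pairs. -/
lemma quad_swap (A : Fin L → Finset (Fin K)) (f : Fin L → Fin K → Fin L → Fin K → ℝ) :
    ∑ l, ∑ k ∈ A l, ∑ i, ∑ t ∈ A i, f l k i t
      = ∑ i, ∑ t ∈ A i, ∑ l, ∑ k ∈ A l, f l k i t := by
  calc ∑ l, ∑ k ∈ A l, ∑ i, ∑ t ∈ A i, f l k i t
      = ∑ l, ∑ i, ∑ k ∈ A l, ∑ t ∈ A i, f l k i t :=
        Finset.sum_congr rfl fun l _ => Finset.sum_comm
    _ = ∑ i, ∑ l, ∑ k ∈ A l, ∑ t ∈ A i, f l k i t := Finset.sum_comm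
    _ = ∑ i, ∑ l, ∑ t ∈ A i, ∑ k ∈ A l, f l k i t :=
        Finset.sum_congr rfl fun i _ => Finset.sum_congr rfl fun l _ =>
          Finset.sum_comm
    _ = ∑ i, ∑ t ∈ A i, ∑ l, ∑ k ∈ A l, f l k i t :=
        Finset.sum_congr rfl fun i _ => Finset.sum_comm

/-- The key decoupling identity: the weighted-MSE objective is, as a function of the
data square-root powers `rho`, a sum of decoupled quadratics plus a constant. -/
lemma key_identity (M : ℕ) (σ2 : ℝ) (A : Fin L → Finset (Fin K))
    (β : Fin L → Fin K → Fin L → ℝ) (u w rhat rho : Fin L → Fin K → ℝ) :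
    ∑ l, ∑ k ∈ A l, w l k * eMSE M σ2 A β (u l k) rhat rho l k
      = (∑ l, ∑ k ∈ A l,
          (etaData M σ2 A β u w rhat l k * rho l k ^ 2
            - 2 * (Real.sqrt ((M : ℝ) * (K : ℝ)) * rhat l k * u l k * w l k * β l k l)
                * rho l k))
        + ∑ l, ∑ k ∈ A l, w l k *
            ((u l k) ^ 2 * ((K : ℝ) * ∑ i ∈ Pset A k, rhat i k ^ 2 * β i k l + σ2) * σ2
              + 1) := by
  classical
  have T1 :
      ∑ l, ∑ k ∈ A l, w l k * ((M : ℝ) * (K : ℝ) * u l k ^ 2 *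
          ∑ i ∈ Pset A k, rho i k ^ 2 * rhat i k ^ 2 * β i k l ^ 2)
        = ∑ l, ∑ k ∈ A l,
            (rhat l k ^ 2 * (M : ℝ) * (K : ℝ) *
              ∑ i ∈ Pset A k, w i k * u i k ^ 2 * β l k i ^ 2) * rho l k ^ 2 := by
    have lhs_eq :
        ∑ l, ∑ k ∈ A l, w l k * ((M : ℝ) * (K : ℝ) * u l k ^ 2 *
            ∑ i ∈ Pset A k, rho i k ^ 2 * rhat i k ^ 2 * β i k l ^ 2)
          = ∑ l, ∑ k ∈ A l, ∑ i ∈ Pset A k,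
              w l k * ((M : ℝ) * (K : ℝ)) * u l k ^ 2 * (rho i k ^ 2 * rhat i k ^ 2 * β i k l ^ 2) := by
      refine Finset.sum_congr rfl fun l _ => Finset.sum_congr rfl fun k _ => ?_
      simp only [Finset.mul_sum]
      exact Finset.sum_congr rfl fun i _ => by ring
    have rhs_eq :
        ∑ l, ∑ k ∈ A l,
            (rhat l k ^ 2 * (M : ℝ) * (K : ℝ) *
              ∑ i ∈ Pset A k, w i k * u i k ^ 2 * β l k i ^ 2) * rho l k ^ 2
          = ∑ l, ∑ k ∈ A l, ∑ i ∈ Pset A k,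
              w i k * ((M : ℝ) * (K : ℝ)) * u i k ^ 2 * (rho l k ^ 2 * rhat l k ^ 2 * β l k i ^ 2) := by
      refine Finset.sum_congr rfl fun l _ => Finset.sum_congr rfl fun k _ => ?_
      simp only [Finset.mul_sum, Finset.sum_mul]
      exact Finset.sum_congr rfl fun i _ => by ring
    rw [lhs_eq, rhs_eq]
    exact tri_swap A (fun l k i => w l k * ((M : ℝ) * (K : ℝ)) * u l k ^ 2 *
      (rho i k ^ 2 * rhat i k ^ 2 * β i k l ^ 2))
  have T2 :
      ∑ l, ∑ k ∈ A l, w l k * (u l k ^ 2 *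
          ((K : ℝ) * ∑ i ∈ Pset A k, rhat i k ^ 2 * β i k l + σ2) *
          (∑ i, ∑ t ∈ A i, rho i t ^ 2 * β i t l))
        = ∑ l, ∑ k ∈ A l,
            (∑ i, ∑ t ∈ A i, w i t * u i t ^ 2 * β l k i *
              ((K : ℝ) * ∑ j ∈ Pset A t, rhat j t ^ 2 * β j t i + σ2)) * rho l k ^ 2 := by
    have lhs_eq :
        ∑ l, ∑ k ∈ A l, w l k * (u l k ^ 2 *
            ((K : ℝ) * ∑ i ∈ Pset A k, rhat i k ^ 2 * β i k l + σ2) *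
            (∑ i, ∑ t ∈ A i, rho i t ^ 2 * β i t l))
          = ∑ l, ∑ k ∈ A l, ∑ i, ∑ t ∈ A i,
              w l k * u l k ^ 2 *
                ((K : ℝ) * ∑ j ∈ Pset A k, rhat j k ^ 2 * β j k l + σ2) *
                (rho i t ^ 2 * β i t l) := by
      refine Finset.sum_congr rfl fun l _ => Finset.sum_congr rfl fun k _ => ?_
      rw [show w l k * (u l k ^ 2 *
            ((K : ℝ) * ∑ i ∈ Pset A k, rhat i k ^ 2 * β i k l + σ2) *
            (∑ i, ∑ t ∈ A i, rho i t ^ 2 * β i t l))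
          = (∑ i, ∑ t ∈ A i, rho i t ^ 2 * β i t l) *
            (w l k * u l k ^ 2 *
              ((K : ℝ) * ∑ i ∈ Pset A k, rhat i k ^ 2 * β i k l + σ2)) from by ring,
        Finset.sum_mul]
      refine Finset.sum_congr rfl fun i _ => ?_
      rw [Finset.sum_mul]
      exact Finset.sum_congr rfl fun t _ => by ring
    have rhs_eq :
        ∑ l, ∑ k ∈ A l,
            (∑ i, ∑ t ∈ A i, w i t * u i t ^ 2 * β l k i *
              ((K : ℝ) * ∑ j ∈ Pset A t, rhat j t ^ 2 * β j t i + σ2)) * rho l k ^ 2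
          = ∑ l, ∑ k ∈ A l, ∑ i, ∑ t ∈ A i,
              w i t * u i t ^ 2 *
                ((K : ℝ) * ∑ j ∈ Pset A t, rhat j t ^ 2 * β j t i + σ2) *
                (rho l k ^ 2 * β l k i) := by
      refine Finset.sum_congr rfl fun l _ => Finset.sum_congr rfl fun k _ => ?_
      rw [Finset.sum_mul]
      refine Finset.sum_congr rfl fun i _ => ?_
      rw [Finset.sum_mul]
      exact Finset.sum_congr rfl fun t _ => by ring
    rw [lhs_eq, rhs_eq]
    exact quad_swap A (fun l k i t =>
      w l k * u l k ^ 2 * ((K : ℝ) * ∑ j ∈ Pset A k, rhat j k ^ 2 * β j k l + σ2) *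
        (rho i t ^ 2 * β i t l))
  -- expand everything and recombine
  have expand :
      ∀ l, ∀ k ∈ A l, w l k * eMSE M σ2 A β (u l k) rhat rho l k
        = w l k * ((M : ℝ) * (K : ℝ) * u l k ^ 2 *
            ∑ i ∈ Pset A k, rho i k ^ 2 * rhat i k ^ 2 * β i k l ^ 2)
          + w l k * (u l k ^ 2 *
              ((K : ℝ) * ∑ i ∈ Pset A k, rhat i k ^ 2 * β i k l + σ2) *
              (∑ i, ∑ t ∈ A i, rho i t ^ 2 * β i t l))
          + (- (2 * (Real.sqrt ((M : ℝ) * (K : ℝ)) * rhat l k * u l k * w l k * β l k l)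
                * rho l k)
              + w l k * ((u l k) ^ 2 *
                  ((K : ℝ) * ∑ i ∈ Pset A k, rhat i k ^ 2 * β i k l + σ2) * σ2 + 1)) := by
    intro l k _
    simp only [eMSE]
    ring
  have eta_split :
      ∀ l, ∀ k ∈ A l,
        etaData M σ2 A β u w rhat l k * rho l k ^ 2
          - 2 * (Real.sqrt ((M : ℝ) * (K : ℝ)) * rhat l k * u l k * w l k * β l k l)
              * rho l k
        = (rhat l k ^ 2 * (M : ℝ) * (K : ℝ) *
              ∑ i ∈ Pset A k, w i k * u i k ^ 2 * β l k i ^ 2) * rho l k ^ 2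
          + (∑ i, ∑ t ∈ A i, w i t * u i t ^ 2 * β l k i *
              ((K : ℝ) * ∑ j ∈ Pset A t, rhat j t ^ 2 * β j t i + σ2)) * rho l k ^ 2
          + (- (2 * (Real.sqrt ((M : ℝ) * (K : ℝ)) * rhat l k * u l k * w l k * β l k l)
                * rho l k)) := by
    intro l k _
    simp only [etaData]
    ring
  calc ∑ l, ∑ k ∈ A l, w l k * eMSE M σ2 A β (u l k) rhat rho l k
      = ∑ l, ∑ k ∈ A l,
          (w l k * ((M : ℝ) * (K : ℝ) * u l k ^ 2 *
              ∑ i ∈ Pset A k, rho i k ^ 2 * rhat i k ^ 2 * β i k l ^ 2)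
            + w l k * (u l k ^ 2 *
                ((K : ℝ) * ∑ i ∈ Pset A k, rhat i k ^ 2 * β i k l + σ2) *
                (∑ i, ∑ t ∈ A i, rho i t ^ 2 * β i t l))
            + (- (2 * (Real.sqrt ((M : ℝ) * (K : ℝ)) * rhat l k * u l k * w l k * β l k l)
                  * rho l k)
                + w l k * ((u l k) ^ 2 *
                    ((K : ℝ) * ∑ i ∈ Pset A k, rhat i k ^ 2 * β i k l + σ2) * σ2 + 1))) :=
        Finset.sum_congr rfl fun l _ => Finset.sum_congr rfl fun k hk => expand l k hk
    _ = (∑ l, ∑ k ∈ A l, w l k * ((M : ℝ) * (K : ℝ) * u l k ^ 2 *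
            ∑ i ∈ Pset A k, rho i k ^ 2 * rhat i k ^ 2 * β i k l ^ 2))
        + (∑ l, ∑ k ∈ A l, w l k * (u l k ^ 2 *
            ((K : ℝ) * ∑ i ∈ Pset A k, rhat i k ^ 2 * β i k l + σ2) *
            (∑ i, ∑ t ∈ A i, rho i t ^ 2 * β i t l)))
        + ∑ l, ∑ k ∈ A l,
            (- (2 * (Real.sqrt ((M : ℝ) * (K : ℝ)) * rhat l k * u l k * w l k * β l k l)
                  * rho l k)
              + w l k * ((u l k) ^ 2 *
                  ((K : ℝ) * ∑ i ∈ Pset A k, rhat i k ^ 2 * β i k l + σ2) * σ2 + 1)) := by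
        simp [Finset.sum_add_distrib]
    _ = (∑ l, ∑ k ∈ A l,
            (rhat l k ^ 2 * (M : ℝ) * (K : ℝ) *
              ∑ i ∈ Pset A k, w i k * u i k ^ 2 * β l k i ^ 2) * rho l k ^ 2)
        + (∑ l, ∑ k ∈ A l,
            (∑ i, ∑ t ∈ A i, w i t * u i t ^ 2 * β l k i *
              ((K : ℝ) * ∑ j ∈ Pset A t, rhat j t ^ 2 * β j t i + σ2)) * rho l k ^ 2)
        + ∑ l, ∑ k ∈ A l,
            (- (2 * (Real.sqrt ((M : ℝ) * (K : ℝ)) * rhat l k * u l k * w l k * β l k l)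
                  * rho l k)
              + w l k * ((u l k) ^ 2 *
                  ((K : ℝ) * ∑ i ∈ Pset A k, rhat i k ^ 2 * β i k l + σ2) * σ2 + 1)) := by
        rw [T1, T2]
    _ = (∑ l, ∑ k ∈ A l,
          (etaData M σ2 A β u w rhat l k * rho l k ^ 2
            - 2 * (Real.sqrt ((M : ℝ) * (K : ℝ)) * rhat l k * u l k * w l k * β l k l)
                * rho l k))
        + ∑ l, ∑ k ∈ A l, w l k *
            ((u l k) ^ 2 * ((K : ℝ) * ∑ i ∈ Pset A k, rhat i k ^ 2 * β i k l + σ2) * σ2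
              + 1) := by
        simp only [← Finset.sum_add_distrib]
        refine Finset.sum_congr rfl fun l _ => Finset.sum_congr rfl fun k hk => ?_
        rw [eta_split l k hk]
        ring

/-- Minimizing `η x² − 2 c x` over `[0, P]` with `η > 0`, `c ≥ 0`: the minimizer
is `min (c/η) P`. -/
lemma quad_min (η c P x : ℝ) (hη : 0 < η) (hc : 0 ≤ c) (hP : 0 ≤ P)
    (hx0 : 0 ≤ x) (hxP : x ≤ P) :
    η * (min (c / η) P) ^ 2 - 2 * c * (min (c / η) P) ≤ η * x ^ 2 - 2 * c * x := by
  rcases le_total (c / η) P with h | h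
  · rw [min_eq_left h]
    have hm : η * (c / η) = c := by field_simp
    nlinarith [sq_nonneg (x - c / η), mul_nonneg hη.le (sq_nonneg (x - c / η))]
  · rw [min_eq_right h]
    have hc' : η * P ≤ c := by
      rw [mul_comm]; exact (le_div_iff₀ hη).mp h
    nlinarith [mul_nonneg (sub_nonneg.2 hxP) (sub_nonneg.2 hc'),
      mul_le_mul_of_nonneg_left hxP hη.le]

end Aux

/-- data-power update, eq. (20): for nonnegative `u`, `w`, `ρ̂` with
`η_{l,k}(u,w,ρ̂) > 0` on all active pairs, the map
`ρ ↦ Σ_l Σ_{k∈A_l} w_{l,k} e_{l,k}(u_{l,k}, ρ̂, ρ)` restricted to the box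
`0 ≤ ρ_{l,k} ≤ √P_{l,k}` attains its global minimum at
`ρ*_{l,k} = min(√(MK) ρ̂_{l,k} u_{l,k} w_{l,k} β_{l,k}^l / η_{l,k}, √P_{l,k})`. -/
theorem stmt6 {L K : ℕ} (M : ℕ) (hL : 0 < L) (hK : 0 < K) (hM : 0 < M)
    (σ2 : ℝ) (hσ : 0 < σ2)
    (A : Fin L → Finset (Fin K))
    (β : Fin L → Fin K → Fin L → ℝ) (hβ : ∀ i t l, 0 ≤ β i t l)
    (Pm : Fin L → Fin K → ℝ) (hPm : ∀ l k, 0 ≤ Pm l k)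
    (u w rhat : Fin L → Fin K → ℝ)
    (hu : ∀ i t, 0 ≤ u i t) (hw : ∀ i t, 0 ≤ w i t) (hrhat : ∀ i t, 0 ≤ rhat i t)
    (hEta : ∀ l, ∀ k ∈ A l, 0 < etaData M σ2 A β u w rhat l k) :
    let rhostar : Fin L → Fin K → ℝ := fun l k =>
      min (Real.sqrt ((M : ℝ) * (K : ℝ)) * rhat l k * u l k * w l k * β l k l /
            etaData M σ2 A β u w rhat l k)
          (Real.sqrt (Pm l k))
    (∀ l, ∀ k ∈ A l, 0 ≤ rhostar l k ∧ rhostar l k ≤ Real.sqrt (Pm l k)) ∧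
    ∀ rho : Fin L → Fin K → ℝ,
      (∀ l, ∀ k ∈ A l, 0 ≤ rho l k ∧ rho l k ≤ Real.sqrt (Pm l k)) →
      (∑ l, ∑ k ∈ A l, w l k * eMSE M σ2 A β (u l k) rhat rhostar l k) ≤
        ∑ l, ∑ k ∈ A l, w l k * eMSE M σ2 A β (u l k) rhat rho l k := by
  intro rhostar
  have hc : ∀ l k, 0 ≤ Real.sqrt ((M : ℝ) * (K : ℝ)) * rhat l k * u l k * w l k * β l k l :=
    fun l k => mul_nonneg (mul_nonneg (mul_nonneg (mul_nonneg
      (Real.sqrt_nonneg _) (hrhat l k)) (hu l k)) (hw l k)) (hβ l k l)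
  constructor
  · intro l k hk
    exact ⟨le_min (div_nonneg (hc l k) (hEta l k hk).le) (Real.sqrt_nonneg _),
      min_le_right _ _⟩
  · intro rho hrho
    rw [key_identity M σ2 A β u w rhat rhostar, key_identity M σ2 A β u w rhat rho]
    apply add_le_add_left
    refine Finset.sum_le_sum fun l _ => Finset.sum_le_sum fun k hk => ?_
    exact quad_min _ _ _ _ (hEta l k hk) (hc l k) (Real.sqrt_nonneg _)
      (hrho l k hk).1 (hrho l k hk).2
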